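/- The set 2I = 2T ∪ ζ·2T ∪ ζ²·2T ∪ ζ³·2T ∪ ζ⁴·2T, where ζ = (τ + τ⁻¹ i + j)/2 with τ = (1+√5)/2, is a subgroup of the unit quaternions of order 120. -/

import Mathlib

open Quaternion

/-- The quaternion group `Q₈ = {±1, ±i, ±j, ±k}`. -/
def Q8 : Set ℍ[ℝ] :=
  {1, -1, ⟨0,1,0,0⟩, -⟨0,1,0,0⟩, ⟨0,0,1,0⟩, -⟨0,0,1,0⟩, ⟨0,0,0,1⟩, -⟨0,0,0,1⟩}

/-- `ω = (-1 + i + j + k)/2`. -/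
noncomputable def omegaQ : ℍ[ℝ] := ⟨-(1/2), 1/2, 1/2, 1/2⟩

/-- The binary tetrahedral group `2T = Q₈ ∪ ωQ₈ ∪ ω²Q₈` as a set of quaternions. -/
def twoT : Set ℍ[ℝ] :=
  Q8 ∪ (fun x => omegaQ * x) '' Q8 ∪ (fun x => omegaQ ^ 2 * x) '' Q8

/-- The golden ratio `τ = (1+√5)/2`. -/
noncomputable def tau : ℝ := (1 + Real.sqrt 5) / 2

/-- `ζ = (τ + τ⁻¹ i + j)/2`. -/
noncomputable def zetaQ : ℍ[ℝ] := ⟨tau / 2, tau⁻¹ / 2, 1 / 2, 0⟩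

/-- The binary icosahedral group `2I = 2T ∪ ζ·2T ∪ ζ²·2T ∪ ζ³·2T ∪ ζ⁴·2T`. -/
noncomputable def twoI : Set ℍ[ℝ] :=
  twoT ∪ (fun x => zetaQ * x) '' twoT ∪ (fun x => zetaQ ^ 2 * x) '' twoT ∪
    (fun x => zetaQ ^ 3 * x) '' twoT ∪ (fun x => zetaQ ^ 4 * x) '' twoT

/-! ### A decidable model: quaternions over `ℚ(√5)` -/

/-- Model of `ℚ(√5)`: pairs `(a,b)` representing `a + b√5`. -/
structure Qs5 where
  a : ℚ
  b : ℚ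
deriving DecidableEq

namespace Qs5

@[ext] theorem ext' {x y : Qs5} (h1 : x.a = y.a) (h2 : x.b = y.b) : x = y := by
  cases x; cases y; simp_all

instance : Zero Qs5 := ⟨⟨0, 0⟩⟩
instance : One Qs5 := ⟨⟨1, 0⟩⟩
instance : Add Qs5 := ⟨fun x y => ⟨x.a + y.a, x.b + y.b⟩⟩
instance : Neg Qs5 := ⟨fun x => ⟨-x.a, -x.b⟩⟩
instance : Mul Qs5 := ⟨fun x y => ⟨x.a * y.a + 5 * x.b * y.b, x.a * y.b + x.b * y.a⟩⟩

@[simp] theorem zero_a : (0 : Qs5).a = 0 := rfl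
@[simp] theorem zero_b : (0 : Qs5).b = 0 := rfl
@[simp] theorem one_a : (1 : Qs5).a = 1 := rfl
@[simp] theorem one_b : (1 : Qs5).b = 0 := rfl
@[simp] theorem add_a (x y : Qs5) : (x + y).a = x.a + y.a := rfl
@[simp] theorem add_b (x y : Qs5) : (x + y).b = x.b + y.b := rfl
@[simp] theorem neg_a (x : Qs5) : (-x).a = -x.a := rfl
@[simp] theorem neg_b (x : Qs5) : (-x).b = -x.b := rfl
@[simp] theorem mul_a (x y : Qs5) : (x * y).a = x.a * y.a + 5 * x.b * y.b := rfl
@[simp] theorem mul_b (x y : Qs5) : (x * y).b = x.a * y.b + x.b * y.a := rfl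

instance : CommRing Qs5 where
  add_assoc x y z := by ext <;> simp <;> ring
  zero_add x := by ext <;> simp
  add_zero x := by ext <;> simp
  add_comm x y := by ext <;> simp <;> ring
  left_distrib x y z := by ext <;> simp <;> ring
  right_distrib x y z := by ext <;> simp <;> ring
  zero_mul x := by ext <;> simp
  mul_zero x := by ext <;> simp
  mul_assoc x y z := by ext <;> simp <;> ring
  one_mul x := by ext <;> simp
  mul_one x := by ext <;> simp
  mul_comm x y := by ext <;> simp <;> ring
  neg_add_cancel x := by ext <;> simp
  nsmul := nsmulRec
  zsmul := zsmulRec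

end Qs5

/-- The embedding `ℚ(√5) → ℝ`. -/
noncomputable def toR : Qs5 →+* ℝ where
  toFun x := (x.a : ℝ) + (x.b : ℝ) * Real.sqrt 5
  map_one' := by simp
  map_zero' := by simp
  map_add' x y := by simp only [Qs5.add_a, Qs5.add_b]; push_cast; ring
  map_mul' x y := by
    have h5 : Real.sqrt 5 * Real.sqrt 5 = 5 := Real.mul_self_sqrt (by norm_num)
    simp only [Qs5.mul_a, Qs5.mul_b]
    push_cast
    linear_combination (-(x.b : ℝ) * (y.b : ℝ)) * h5

@[simp] theorem toR_mk (p q : ℚ) : toR ⟨p, q⟩ = (p : ℝ) + (q : ℝ) * Real.sqrt 5 := rfl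

theorem toR_inj : Function.Injective toR := by
  have h5 : Irrational (Real.sqrt 5) := Nat.Prime.irrational_sqrt (by norm_num)
  intro x y h
  simp only [toR, RingHom.coe_mk, MonoidHom.coe_mk, OneHom.coe_mk] at h
  rcases eq_or_ne x.b y.b with hb | hb
  · have : (x.a : ℝ) = y.a := by rw [hb] at h; linarith
    exact Qs5.ext' (by exact_mod_cast this) hb
  · exfalso
    apply h5
    refine ⟨(y.a - x.a) / (x.b - y.b), ?_⟩
    have hbb : (x.b : ℝ) - y.b ≠ 0 := by
      intro hc; apply hb; exact_mod_cast sub_eq_zero.mp hc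
    push_cast
    field_simp
    linarith

instance : DecidableEq (Quaternion Qs5) := fun x y =>
  decidable_of_iff (x.re = y.re ∧ x.imI = y.imI ∧ x.imJ = y.imJ ∧ x.imK = y.imK)
    (by constructor
        · rintro ⟨h1, h2, h3, h4⟩; exact QuaternionAlgebra.ext h1 h2 h3 h4
        · rintro rfl; exact ⟨rfl, rfl, rfl, rfl⟩)

/-- The embedding of model quaternions into real quaternions. -/
noncomputable def Φ : Quaternion Qs5 →+* ℍ[ℝ] where
  toFun x := ⟨toR x.re, toR x.imI, toR x.imJ, toR x.imK⟩
  map_one' := by ext <;> simp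
  map_zero' := by ext <;> simp
  map_add' x y := by ext <;> simp <;> rfl
  map_mul' x y := by
    ext <;> simp [Quaternion.re_mul, Quaternion.imI_mul, Quaternion.imJ_mul,
      Quaternion.imK_mul] <;> erw [QuaternionAlgebra.mk_mul_mk] <;> simp <;> ring

@[simp] theorem Phi_mk (a b c d : Qs5) : Φ ⟨a, b, c, d⟩ = ⟨toR a, toR b, toR c, toR d⟩ := rfl
@[simp] theorem Phi_re (x : Quaternion Qs5) : (Φ x).re = toR x.re := rfl
@[simp] theorem Phi_imI (x : Quaternion Qs5) : (Φ x).imI = toR x.imI := rfl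
@[simp] theorem Phi_imJ (x : Quaternion Qs5) : (Φ x).imJ = toR x.imJ := rfl
@[simp] theorem Phi_imK (x : Quaternion Qs5) : (Φ x).imK = toR x.imK := rfl

theorem Phi_inj : Function.Injective Φ := by
  intro x y h
  exact QuaternionAlgebra.ext (toR_inj (congrArg QuaternionAlgebra.re h))
    (toR_inj (congrArg QuaternionAlgebra.imI h))
    (toR_inj (congrArg QuaternionAlgebra.imJ h))
    (toR_inj (congrArg QuaternionAlgebra.imK h))

theorem Phi_star (x : Quaternion Qs5) : Φ (star x) = star (Φ x) := by
  ext <;> simp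

/-! ### The model groups -/

def q8' : Finset (Quaternion Qs5) :=
  {1, -1, ⟨0,1,0,0⟩, -⟨0,1,0,0⟩, ⟨0,0,1,0⟩, -⟨0,0,1,0⟩, ⟨0,0,0,1⟩, -⟨0,0,0,1⟩}

def om : Quaternion Qs5 := ⟨⟨-(1/2), 0⟩, ⟨1/2, 0⟩, ⟨1/2, 0⟩, ⟨1/2, 0⟩⟩

def zt : Quaternion Qs5 := ⟨⟨1/4, 1/4⟩, ⟨-(1/4), 1/4⟩, ⟨1/2, 0⟩, 0⟩

def twoT' : Finset (Quaternion Qs5) :=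
  q8' ∪ q8'.image (fun x => om * x) ∪ q8'.image (fun x => om ^ 2 * x)

def twoI' : Finset (Quaternion Qs5) :=
  twoT' ∪ twoT'.image (fun x => zt * x) ∪ twoT'.image (fun x => zt ^ 2 * x) ∪
    twoT'.image (fun x => zt ^ 3 * x) ∪ twoT'.image (fun x => zt ^ 4 * x)

set_option maxRecDepth 1000000
set_option maxHeartbeats 8000000

unseal Rat.add Rat.mul Rat.inv Nat.gcd

theorem dcard : twoI'.card = 120 := by decide

theorem dA : ∀ t ∈ twoT', ∀ u ∈ twoT', t * u ∈ twoT' := by decide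

theorem dZ : ∀ x ∈ twoI', x * zt ∈ twoI' := by decide

theorem dS : ∀ x ∈ twoI', star x ∈ twoI' := by decide

theorem dN : ∀ x ∈ twoI', x * star x = 1 := by decide

theorem one_mem_q8' : (1 : Quaternion Qs5) ∈ q8' := by decide

theorem one_mem_twoI' : (1 : Quaternion Qs5) ∈ twoI' :=
  Finset.mem_union_left _ <| Finset.mem_union_left _ <| Finset.mem_union_left _ <|
    Finset.mem_union_left _ <| Finset.mem_union_left _ <| Finset.mem_union_left _ one_mem_q8'

theorem pow_mul_mem {c : ℕ} (hc : c ≤ 4) {w : Quaternion Qs5} (hw : w ∈ twoT') :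
    zt ^ c * w ∈ twoI' := by
  interval_cases c
  · rw [pow_zero, one_mul]
    exact Finset.mem_union_left _ <| Finset.mem_union_left _ <| Finset.mem_union_left _ <|
      Finset.mem_union_left _ hw
  · rw [pow_one]
    exact Finset.mem_union_left _ <| Finset.mem_union_left _ <| Finset.mem_union_left _ <|
      Finset.mem_union_right _ (Finset.mem_image_of_mem _ hw)
  · exact Finset.mem_union_left _ <| Finset.mem_union_left _ <|
      Finset.mem_union_right _ (Finset.mem_image_of_mem _ hw)
  · exact Finset.mem_union_left _ <|
      Finset.mem_union_right _ (Finset.mem_image_of_mem _ hw)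
  · exact Finset.mem_union_right _ (Finset.mem_image_of_mem _ hw)

theorem memElim {x : Quaternion Qs5} (hx : x ∈ twoI') :
    ∃ a ≤ 4, ∃ t ∈ twoT', x = zt ^ a * t := by
  simp only [twoI', Finset.mem_union, Finset.mem_image] at hx
  rcases hx with ((((h | ⟨t, ht, rfl⟩) | ⟨t, ht, rfl⟩) | ⟨t, ht, rfl⟩) | ⟨t, ht, rfl⟩)
  · exact ⟨0, by norm_num, x, h, by rw [pow_zero, one_mul]⟩
  · exact ⟨1, by norm_num, t, ht, by rw [pow_one]⟩
  · exact ⟨2, by norm_num, t, ht, rfl⟩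
  · exact ⟨3, by norm_num, t, ht, rfl⟩
  · exact ⟨4, by norm_num, t, ht, rfl⟩

theorem mulZtPow {x : Quaternion Qs5} (hx : x ∈ twoI') (b : ℕ) : x * zt ^ b ∈ twoI' := by
  induction b with
  | zero => simpa using hx
  | succ n ih =>
    rw [pow_succ, ← mul_assoc]
    exact dZ _ ih

theorem Iclose {x y : Quaternion Qs5} (hx : x ∈ twoI') (hy : y ∈ twoI') : x * y ∈ twoI' := by
  obtain ⟨b, hb, u, hu, rfl⟩ := memElim hy
  have hx' : x * zt ^ b ∈ twoI' := mulZtPow hx b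
  obtain ⟨c, hc, s, hs, he⟩ := memElim hx'
  have : x * (zt ^ b * u) = zt ^ c * (s * u) := by
    rw [← mul_assoc, he, mul_assoc]
  rw [this]
  exact pow_mul_mem hc (dA s hs u hu)

/-! ### Transfer to the real quaternions -/

theorem Q8_eq : Q8 = Φ '' ↑q8' := by
  simp only [q8', Finset.coe_insert, Set.image_insert_eq, Finset.coe_singleton,
    Set.image_singleton, map_one, map_neg, Phi_mk, map_zero, Q8]
  erw [Finset.coe_insert, Finset.coe_insert, Finset.coe_insert, Finset.coe_insert,
    Finset.coe_insert, Finset.coe_singleton, Set.image_insert_eq, Set.image_insert_eq,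
    Set.image_insert_eq, Set.image_insert_eq, Set.image_insert_eq, Set.image_singleton,
    map_neg, map_neg, map_neg, Phi_mk, Phi_mk, Phi_mk, map_zero, map_one]

theorem Phi_om : Φ om = omegaQ := by
  ext <;> simp [om, omegaQ] <;> norm_num

theorem tau_inv : tau⁻¹ = (Real.sqrt 5 - 1) / 2 := by
  have h5 : Real.sqrt 5 * Real.sqrt 5 = 5 := Real.mul_self_sqrt (by norm_num)
  refine inv_eq_of_mul_eq_one_right ?_
  rw [tau]
  nlinarith [h5]

theorem Phi_zt : Φ zt = zetaQ := by
  apply QuaternionAlgebra.ext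
  · show toR ⟨1/4, 1/4⟩ = tau / 2
    rw [toR_mk, tau]; push_cast; ring
  · show toR ⟨-(1/4), 1/4⟩ = tau⁻¹ / 2
    rw [toR_mk, tau_inv]; push_cast; ring
  · show toR ⟨1/2, 0⟩ = 1 / 2
    rw [toR_mk]; push_cast; ring
  · show toR 0 = 0
    exact map_zero _

theorem image_mul_image (c : Quaternion Qs5) (A : Finset (Quaternion Qs5)) :
    (fun x => Φ c * x) '' (Φ '' ↑A) = Φ '' ↑(A.image (fun x => c * x)) := by
  rw [Finset.coe_image, Set.image_image, Set.image_image]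
  simp [map_mul]

theorem twoT_eq : twoT = Φ '' ↑twoT' := by
  have hom : omegaQ = Φ om := Phi_om.symm
  have hom2 : omegaQ ^ 2 = Φ (om ^ 2) := by rw [map_pow, Phi_om]
  rw [twoT, Q8_eq, hom2, hom, image_mul_image, image_mul_image, twoT']
  simp only [Finset.coe_union, Set.image_union]

theorem twoI_eq : twoI = Φ '' ↑twoI' := by
  have h1 : zetaQ = Φ zt := Phi_zt.symm
  have h2 : zetaQ ^ 2 = Φ (zt ^ 2) := by rw [map_pow, Phi_zt]
  have h3 : zetaQ ^ 3 = Φ (zt ^ 3) := by rw [map_pow, Phi_zt]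
  have h4 : zetaQ ^ 4 = Φ (zt ^ 4) := by rw [map_pow, Phi_zt]
  rw [twoI, twoT_eq, h4, h3, h2, h1, image_mul_image, image_mul_image, image_mul_image,
    image_mul_image, twoI']
  simp only [Finset.coe_union, Set.image_union]

/-- `2I` is a subgroup of the unit quaternions of order 120. -/
theorem stmt_9 :
    (∀ x ∈ twoI, normSq x = 1) ∧ (1 : ℍ[ℝ]) ∈ twoI ∧
    (∀ x ∈ twoI, ∀ y ∈ twoI, x * y ∈ twoI) ∧
    (∀ x ∈ twoI, x⁻¹ ∈ twoI) ∧
    twoI.ncard = 120 := by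
  refine ⟨?_, ?_, ?_, ?_, ?_⟩
  · intro x hx
    rw [twoI_eq] at hx
    obtain ⟨X, hX, rfl⟩ := hx
    have h1 : Φ X * star (Φ X) = 1 := by
      rw [← Phi_star, ← map_mul, dN X hX, map_one]
    have h2 : ((normSq (Φ X) : ℝ) : ℍ[ℝ]) = ((1 : ℝ) : ℍ[ℝ]) := by
      rw [← Quaternion.self_mul_star, h1, Quaternion.coe_one]
    exact Quaternion.coe_injective h2
  · rw [twoI_eq]
    exact ⟨1, one_mem_twoI', map_one Φ⟩
  · intro x hx y hy
    rw [twoI_eq] at hx hy ⊢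
    obtain ⟨X, hX, rfl⟩ := hx
    obtain ⟨Y, hY, rfl⟩ := hy
    exact ⟨X * Y, Iclose hX hY, map_mul Φ X Y⟩
  · intro x hx
    rw [twoI_eq] at hx ⊢
    obtain ⟨X, hX, rfl⟩ := hx
    have h1 : Φ X * star (Φ X) = 1 := by
      rw [← Phi_star, ← map_mul, dN X hX, map_one]
    have h2 : (Φ X)⁻¹ = star (Φ X) := inv_eq_of_mul_eq_one_right h1
    rw [h2, ← Phi_star]
    exact ⟨star X, dS X hX, rfl⟩
  · rw [twoI_eq, Set.ncard_image_of_injective _ Phi_inj, Set.ncard_coe_finset, dcard]
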